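/- Let A be a commutative ring, J ⊆ A an ideal, and N ∈ ℕ. Let R = A[X_1, …, X_N] be the polynomial ring, Δ ⊆ R the ideal generated by X_1, …, X_N, and 𝔍 = J·R + Δ (the kernel of the map R → A/J sending each X_k to 0 and reducing coefficients mod J). Fix integers 0 ≤ j ≤ m. Multiplication in R induces a well-defined A-linear map (J^{m−j}/J^{m−j+1}) ⊗_A (Δ^j/Δ^{j+1}) → (J^m·R + J^{m−1}·Δ + ⋯ + J^{m−j}·Δ^j + 𝔍^{m+1}) / (J^m·R + J^{m−1}·Δ + ⋯ + J^{m−j+1}·Δ^{j−1} + 𝔍^{m+1}), and this map is an isomorphism of A-modules. -/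

import Mathlib

universe u

open TensorProduct

namespace EnvelopeFiltration

variable (A : Type u) [CommRing A] (J : Ideal A) (N : ℕ)

/-- The ideal `Δ = (X_1, …, X_N)` of `A[X_1, …, X_N]`. -/
noncomputable def Δ : Ideal (MvPolynomial (Fin N) A) :=
  Ideal.span (Set.range (MvPolynomial.X : Fin N → MvPolynomial (Fin N) A))

/-- The ideal `J·R` of `R = A[X_1, …, X_N]` generated by the image of `J`. -/
noncomputable def JR : Ideal (MvPolynomial (Fin N) A) :=
  Ideal.map (MvPolynomial.C : A →+* MvPolynomial (Fin N) A) J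

/-- The ideal `𝔍 = J·R + Δ`, the kernel of `R → A/J`, `X_k ↦ 0`. -/
noncomputable def 𝔍 : Ideal (MvPolynomial (Fin N) A) := JR A J N + Δ A N

/-- The ideal `J^m·R + J^{m-1}·Δ + ⋯ + J^{m-j+1}·Δ^{j-1} + 𝔍^{m+1}` of `R`
(the sum ranges over `i < j`). -/
noncomputable def filt (m j : ℕ) : Ideal (MvPolynomial (Fin N) A) :=
  (∑ i ∈ Finset.range j, JR A J N ^ (m - i) * Δ A N ^ i) + 𝔍 A J N ^ (m + 1)

end EnvelopeFiltration

namespace EnvProof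

open EnvelopeFiltration MvPolynomial Finsupp

variable {A : Type u} [CommRing A] {J : Ideal A} {N : ℕ}

lemma degree_add' {σ : Type*} (a b : σ →₀ ℕ) : Finsupp.degree (a + b) = Finsupp.degree a + Finsupp.degree b := by
  simp [Finsupp.degree_eq_weight_one, map_add]

lemma degree_single' {σ : Type*} (i : σ) (n : ℕ) : Finsupp.degree (Finsupp.single i n) = n := by
  classical
  exact Finsupp.degree_single i n

-- generic sum membership induction
lemma sum_induction {R M ι : Type*} [Semiring R] [AddCommMonoid M] [Module R M]
    {s : Finset ι} {f : ι → Submodule R M} {x : M} (hx : x ∈ ∑ i ∈ s, f i)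
    {P : M → Prop} (h0 : P 0) (hadd : ∀ a b, P a → P b → P (a + b))
    (hmem : ∀ i ∈ s, ∀ y ∈ f i, P y) : P x := by
  classical
  induction s using Finset.induction_on generalizing x with
  | empty => simp only [Finset.sum_empty, Submodule.mem_bot] at hx; subst hx; exact h0
  | insert a s hni ih =>
      rw [Finset.sum_insert hni] at hx
      rcases Submodule.mem_sup.mp hx with ⟨y, hy, z, hz, rfl⟩
      exact hadd _ _ (hmem a (Finset.mem_insert_self a s) y hy)
        (ih hz (fun i hi => hmem i (Finset.mem_insert_of_mem hi)))

lemma natCast_ideal_eq_top {R : Type*} [CommRing R] (n : ℕ) (hn : n ≠ 0) :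
    (n : Ideal R) = ⊤ := by
  induction n with
  | zero => omega
  | succ k ih =>
      rcases eq_or_ne k 0 with h | h
      · subst h; simpa using Ideal.one_eq_top
      · rw [Nat.cast_succ, ih h]; simp [Ideal.one_eq_top]

lemma J_pow_binomial (n : ℕ) :
    𝔍 A J N ^ n = ∑ k ∈ Finset.range (n + 1), JR A J N ^ k * Δ A N ^ (n - k) := by
  rw [𝔍, add_pow]
  refine Finset.sum_congr rfl fun k hk => ?_
  rw [natCast_ideal_eq_top _ (Nat.choose_pos (Finset.mem_range_succ_iff.mp hk)).ne', Ideal.mul_top]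


section W

variable (A N)

/-- Polynomials all of whose coefficients in degrees `< b` vanish. -/
def W (b : ℕ) : Ideal (MvPolynomial (Fin N) A) where
  carrier := {p | ∀ ν : Fin N →₀ ℕ, Finsupp.degree ν < b → coeff ν p = 0}
  add_mem' := by intro p q hp hq ν hν; simp [coeff_add, hp ν hν, hq ν hν]
  zero_mem' := by intro ν hν; simp
  smul_mem' := by
    intro r p hp ν hν
    rw [smul_eq_mul, coeff_mul]
    refine Finset.sum_eq_zero fun x hx => ?_
    have hxν : x.1 + x.2 = ν := Finset.HasAntidiagonal.mem_antidiagonal.mp hx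
    have : Finsupp.degree x.2 ≤ Finsupp.degree ν := by
      rw [← hxν, degree_add']; omega
    rw [hp x.2 (lt_of_le_of_lt this hν), mul_zero]

variable {A N}

lemma mem_W {b : ℕ} {p : MvPolynomial (Fin N) A} :
    p ∈ W A N b ↔ ∀ ν : Fin N →₀ ℕ, Finsupp.degree ν < b → coeff ν p = 0 := Iff.rfl

lemma delta_pow_le_W (b : ℕ) : Δ A N ^ b ≤ W A N b := by
  induction b with
  | zero => exact fun p _ => by intro ν hν; omega
  | succ b ih =>
      rw [pow_succ]
      refine Ideal.mul_le.mpr fun p hp q hq => ?_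
      have hp' := ih hp
      -- q ∈ Δ: span of X i
      refine Submodule.span_induction (p := fun q _ => p * q ∈ W A N (b + 1)) ?_ ?_ ?_ ?_ hq
      · rintro _ ⟨i, rfl⟩
        intro ν hν
        classical
        rw [coeff_mul_X' ν i p]
        split_ifs with h
        · refine hp' _ ?_
          have h1 : ν i ≠ 0 := Finsupp.mem_support_iff.mp h
          have : ν = (ν - Finsupp.single i 1) + Finsupp.single i 1 := by
            ext k
            rw [Finsupp.add_apply, Finsupp.tsub_apply, Finsupp.single_apply]
            split_ifs with hk
            · subst hk; omega
            · omega
          rw [this, degree_add', degree_single'] at hν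
          omega
        · rfl
      · simpa using (W A N (b+1)).zero_mem
      · intro x y _ _ hx hy; rw [mul_add]; exact (W A N (b+1)).add_mem hx hy
      · intro a x _ hx
        rw [smul_eq_mul, ← mul_assoc, mul_comm p a, mul_assoc]
        exact Ideal.mul_mem_left _ _ hx

lemma X_mem_delta (i : Fin N) : (X i : MvPolynomial (Fin N) A) ∈ Δ A N :=
  Ideal.subset_span ⟨i, rfl⟩

lemma monomial_one_mem_delta_pow (ν : Fin N →₀ ℕ) :
    (monomial ν (1:A)) ∈ Δ A N ^ (Finsupp.degree ν) := by
  classical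
  induction ν using Finsupp.induction with
    | zero => simp [Ideal.one_eq_top]
    | single_add i n f hfi hn ihf =>
        have : (monomial (Finsupp.single i n + f) (1:A)) = (X i) ^ n * monomial f 1 := by
          rw [X_pow_eq_monomial, monomial_mul, one_mul]
        rw [this, degree_add', degree_single', pow_add]
        exact Ideal.mul_mem_mul (Ideal.pow_mem_pow (X_mem_delta i) n) ihf

lemma monomial_mem_delta_pow {b : ℕ} {ν : Fin N →₀ ℕ} (h : b ≤ Finsupp.degree ν) (c : A) :
    monomial ν c ∈ Δ A N ^ b := by
  have : monomial ν c = C c * monomial ν 1 := by rw [C_mul_monomial, mul_one]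
  rw [this]
  exact Ideal.mul_mem_left _ _ (Ideal.pow_le_pow_right h (monomial_one_mem_delta_pow ν))

lemma W_le_delta_pow (b : ℕ) : W A N b ≤ Δ A N ^ b := by
  intro p hp
  classical
  rw [p.as_sum]
  refine Submodule.sum_mem _ fun ν hν => monomial_mem_delta_pow ?_ _
  by_contra h
  exact (MvPolynomial.mem_support_iff.mp hν) (hp ν (by omega))

lemma delta_pow_eq_W (b : ℕ) : Δ A N ^ b = W A N b :=
  le_antisymm (delta_pow_le_W b) (W_le_delta_pow b)

end W

lemma JR_pow (a : ℕ) : JR A J N ^ a = Ideal.map (C : A →+* MvPolynomial (Fin N) A) (J ^ a) := by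
  rw [JR, Ideal.map_pow]

lemma coeff_mem_of_mem_JR_pow {a : ℕ} {p : MvPolynomial (Fin N) A}
    (hp : p ∈ JR A J N ^ a) (ν : Fin N →₀ ℕ) : coeff ν p ∈ J ^ a := by
  rw [JR_pow] at hp
  exact mem_map_C_iff.mp hp ν

/-- Key coefficient lemma: elements of `filt A J N m j` have all degree-`j`
coefficients in `J ^ (m - j + 1)`. -/
lemma coeff_filt {m j : ℕ} (hjm : j ≤ m) {p : MvPolynomial (Fin N) A}
    (hp : p ∈ filt A J N m j) {ν : Fin N →₀ ℕ} (hν : Finsupp.degree ν = j) :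
    coeff ν p ∈ J ^ (m - j + 1) := by
  rw [filt] at hp
  rcases Submodule.mem_sup.mp hp with ⟨x, hx, y, hy, rfl⟩
  rw [coeff_add]
  refine Submodule.add_mem _ ?_ ?_
  · -- x in the finite sum
    refine sum_induction (P := fun z => coeff ν z ∈ J ^ (m - j + 1)) hx
      (by simpa using Submodule.zero_mem _)
      (fun a b ha hb => by simpa [coeff_add] using Submodule.add_mem _ ha hb) ?_
    intro i hi z hz
    have h1 : z ∈ JR A J N ^ (m - i) := Ideal.mul_le_left hz
    have : coeff ν z ∈ J ^ (m - i) := coeff_mem_of_mem_JR_pow h1 ν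
    refine Ideal.pow_le_pow_right ?_ this
    have := Finset.mem_range.mp hi
    omega
  · -- y in 𝔍 ^ (m+1)
    rw [J_pow_binomial] at hy
    refine sum_induction (P := fun z => coeff ν z ∈ J ^ (m - j + 1)) hy
      (by simpa using Submodule.zero_mem _)
      (fun a b ha hb => by simpa [coeff_add] using Submodule.add_mem _ ha hb) ?_
    intro k hk z hz
    have hk' := Finset.mem_range.mp hk
    by_cases h : k ≤ m - j
    · -- then m + 1 - k > j, so coefficient vanishes
      have hz2 : z ∈ Δ A N ^ (m + 1 - k) := Ideal.mul_le_right hz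
      have := delta_pow_le_W _ hz2 ν (by omega)
      simp [this]
    · have hz1 : z ∈ JR A J N ^ k := Ideal.mul_le_left hz
      have : coeff ν z ∈ J ^ k := coeff_mem_of_mem_JR_pow hz1 ν
      exact Ideal.pow_le_pow_right (by omega) this


noncomputable section Maps

variable (A : Type u) [CommRing A] (J : Ideal A) (N j m : ℕ)

/-- The quotient `J^{m-j}/J^{m-j+1}`. -/
abbrev QJmod : Submodule A (J ^ (m - j) : Ideal A) :=
  Submodule.comap (J ^ (m - j) : Ideal A).subtype (J ^ (m - j + 1) : Ideal A)

abbrev QJ := (J ^ (m - j) : Ideal A) ⧸ QJmod A J j m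

abbrev QDmod : Submodule (MvPolynomial (Fin N) A) (Δ A N ^ j : Ideal (MvPolynomial (Fin N) A)) :=
  Submodule.comap (Δ A N ^ j : Ideal (MvPolynomial (Fin N) A)).subtype
    (Δ A N ^ (j + 1) : Ideal (MvPolynomial (Fin N) A))

abbrev QD := (Δ A N ^ j : Ideal (MvPolynomial (Fin N) A)) ⧸ QDmod A N j

abbrev Rq := MvPolynomial (Fin N) A ⧸ filt A J N m j

lemma CJ_mul_mem_J_pow {a : A} {b c : ℕ} (ha : a ∈ J ^ b) {d : MvPolynomial (Fin N) A}
    (hd : d ∈ Δ A N ^ c) : C a * d ∈ 𝔍 A J N ^ (b + c) := by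
  rw [pow_add]
  refine Ideal.mul_mem_mul ?_ (Ideal.pow_right_mono (le_sup_right : Δ A N ≤ 𝔍 A J N) c hd)
  refine Ideal.pow_right_mono (le_sup_left : JR A J N ≤ 𝔍 A J N) b ?_
  rw [JR_pow]
  exact Ideal.mem_map_of_mem _ ha

lemma J_pow_succ_le_filt : 𝔍 A J N ^ (m + 1) ≤ filt A J N m j := le_sup_right

/-- The bilinear multiplication map. -/
noncomputable def betaFull : (J ^ (m - j) : Ideal A) →ₗ[A]
    (Δ A N ^ j : Ideal (MvPolynomial (Fin N) A)) →ₗ[A] Rq A J N j m :=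
  LinearMap.mk₂ A (fun a d => Submodule.Quotient.mk (C a.1 * d.1))
    (by intro a a' d
        show Submodule.Quotient.mk (C ((a + a' : ↥(J ^ (m-j))) : A) * d.1) = _
        have : C ((a + a' : ↥(J ^ (m-j))) : A) * d.1 = C a.1 * d.1 + C a'.1 * d.1 := by
          push_cast [map_add]; ring
        rw [this, Submodule.Quotient.mk_add])
    (by intro c a d
        show Submodule.Quotient.mk (C ((c • a : ↥(J ^ (m-j))) : A) * d.1) = _
        have : C ((c • a : ↥(J ^ (m-j))) : A) * d.1 = c • (C a.1 * d.1) := by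
          push_cast
          rw [smul_eq_mul, map_mul, smul_eq_C_mul]; ring
        rw [this, Submodule.Quotient.mk_smul])
    (by intro a d d'
        show Submodule.Quotient.mk (C a.1 * ((d + d' : ↥(Δ A N ^ j)) : MvPolynomial (Fin N) A)) = _
        have : C a.1 * ((d + d' : ↥(Δ A N ^ j)) : MvPolynomial (Fin N) A)
            = C a.1 * d.1 + C a.1 * d'.1 := by push_cast; ring
        rw [this, Submodule.Quotient.mk_add])
    (by intro c a d
        show Submodule.Quotient.mk (C a.1 * ((c • d : ↥(Δ A N ^ j)) : MvPolynomial (Fin N) A)) = _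
        have : C a.1 * ((c • d : ↥(Δ A N ^ j)) : MvPolynomial (Fin N) A)
            = c • (C a.1 * d.1) := by
          push_cast
          rw [smul_eq_C_mul, smul_eq_C_mul]; ring
        rw [this, Submodule.Quotient.mk_smul])

lemma betaFull_descends_left (hjm : j ≤ m) :
    QJmod A J j m ≤ LinearMap.ker (betaFull A J N j m) := by
  intro a ha
  rw [LinearMap.mem_ker]
  ext d
  show Submodule.Quotient.mk (C a.1 * d.1) = (0 : Rq A J N j m)
  rw [Submodule.Quotient.mk_eq_zero]
  refine J_pow_succ_le_filt A J N j m ?_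
  have := CJ_mul_mem_J_pow A J N (Submodule.mem_comap.mp ha) d.2
  rwa [show m - j + 1 + j = m + 1 by omega] at this

noncomputable def beta1 (hjm : j ≤ m) : QJ A J j m →ₗ[A]
    (Δ A N ^ j : Ideal (MvPolynomial (Fin N) A)) →ₗ[A] Rq A J N j m :=
  Submodule.liftQ _ (betaFull A J N j m) (betaFull_descends_left A J N j m hjm)

lemma beta2_descends (hjm : j ≤ m) :
    (QDmod A N j).restrictScalars A ≤ LinearMap.ker ((beta1 A J N j m hjm).flip) := by
  intro d hd
  rw [LinearMap.mem_ker]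
  ext a
  show betaFull A J N j m a d = (0 : Rq A J N j m)
  show Submodule.Quotient.mk (C a.1 * d.1) = (0 : Rq A J N j m)
  rw [Submodule.Quotient.mk_eq_zero]
  refine J_pow_succ_le_filt A J N j m ?_
  have := CJ_mul_mem_J_pow A J N a.2 (show d.1 ∈ Δ A N ^ (j+1) from hd)
  rwa [show m - j + (j + 1) = m + 1 by omega] at this

/-- The induced map `QD → (QJ → Rq)`. -/
noncomputable def beta3 (hjm : j ≤ m) : QD A N j →ₗ[A] QJ A J j m →ₗ[A] Rq A J N j m :=
  (Submodule.liftQ _ ((beta1 A J N j m hjm).flip) (beta2_descends A J N j m hjm)) ∘ₗ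
    (Submodule.Quotient.restrictScalarsEquiv A (QDmod A N j)).symm.toLinearMap

/-- The multiplication map `φ`. -/
noncomputable def phi (hjm : j ≤ m) :
    QJ A J j m ⊗[A] QD A N j →ₗ[A] Rq A J N j m :=
  TensorProduct.lift (beta3 A J N j m hjm).flip

lemma phi_apply (hjm : j ≤ m) (a : A) (ha : a ∈ J ^ (m - j))
    (d : MvPolynomial (Fin N) A) (hd : d ∈ Δ A N ^ j) :
    phi A J N j m hjm ((Submodule.Quotient.mk ⟨a, ha⟩) ⊗ₜ[A] (Submodule.Quotient.mk ⟨d, hd⟩)) =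
      Submodule.Quotient.mk (C a * d) := by
  rfl


lemma coeff_descends (ν : Fin N →₀ ℕ) (hν : Finsupp.degree ν = j) :
    (QDmod A N j).restrictScalars A ≤
      LinearMap.ker ((lcoeff A ν) ∘ₗ ((Δ A N ^ j).subtype.restrictScalars A)) := by
  intro d hd
  rw [LinearMap.mem_ker]
  show coeff ν d.1 = 0
  exact delta_pow_le_W (j + 1) (show d.1 ∈ Δ A N ^ (j+1) from hd) ν (by omega)

/-- The coefficient map `QD → A` for a degree-`j` exponent `ν`. -/
def coeffQD (ν : Fin N →₀ ℕ) (hν : Finsupp.degree ν = j) : QD A N j →ₗ[A] A :=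
  (Submodule.liftQ _ _ (coeff_descends A N j ν hν)) ∘ₗ
    (Submodule.Quotient.restrictScalarsEquiv A (QDmod A N j)).symm.toLinearMap

lemma coeffQD_mk (ν : Fin N →₀ ℕ) (hν : Finsupp.degree ν = j) (d : (Δ A N ^ j : Ideal _)) :
    coeffQD A N j ν hν (Submodule.Quotient.mk d) = coeff ν d.1 := rfl

/-- The coordinate extraction map `θ_ν : QJ ⊗ QD → QJ`. -/
def theta (ν : Fin N →₀ ℕ) (hν : Finsupp.degree ν = j) :
    QJ A J j m ⊗[A] QD A N j →ₗ[A] QJ A J j m :=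
  (TensorProduct.rid A (QJ A J j m)).toLinearMap ∘ₗ
    LinearMap.lTensor (QJ A J j m) (coeffQD A N j ν hν)

lemma theta_tmul (ν : Fin N →₀ ℕ) (hν : Finsupp.degree ν = j)
    (q : QJ A J j m) (d : (Δ A N ^ j : Ideal _)) :
    theta A J N j m ν hν (q ⊗ₜ[A] Submodule.Quotient.mk d) = coeff ν d.1 • q := by
  simp [theta, coeffQD_mk]

/-- The inclusion `QJ → A/J^{m-j+1}`. -/
def iota : QJ A J j m →ₗ[A] (A ⧸ (J ^ (m - j + 1) : Ideal A)) :=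
  Submodule.mapQ _ _ (J ^ (m - j) : Ideal A).subtype le_rfl

lemma iota_mk (a : (J ^ (m - j) : Ideal A)) :
    iota A J j m (Submodule.Quotient.mk a) = Submodule.Quotient.mk a.1 := rfl

lemma iota_injective : Function.Injective (iota A J j m) := by
  rw [← LinearMap.ker_eq_bot]
  rw [Submodule.eq_bot_iff]
  intro x hx
  obtain ⟨a, rfl⟩ := Submodule.Quotient.mk_surjective _ x
  rw [LinearMap.mem_ker, iota_mk, Submodule.Quotient.mk_eq_zero] at hx
  rw [Submodule.Quotient.mk_eq_zero]
  exact hx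

/-- Classes of degree-`j` monomials in `QD`. -/
def xcl (ν : {ν : Fin N →₀ ℕ // Finsupp.degree ν = j}) : QD A N j :=
  Submodule.Quotient.mk ⟨monomial ν.1 1, monomial_mem_delta_pow (le_of_eq ν.2.symm) 1⟩

lemma span_xcl : Submodule.span A (Set.range (xcl A N j)) = ⊤ := by
  classical
  rw [eq_top_iff]
  rintro x -
  obtain ⟨⟨d, hd⟩, rfl⟩ := Submodule.Quotient.mk_surjective _ x
  have hsum : (⟨d, hd⟩ : (Δ A N ^ j : Ideal _)) =
      ∑ ν ∈ d.support.attach, ⟨monomial ν.1 (coeff ν.1 d), by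
        refine monomial_mem_delta_pow ?_ _
        by_contra h
        exact (MvPolynomial.mem_support_iff.mp ν.2)
          (delta_pow_le_W j hd ν.1 (by omega))⟩ := by
    apply Subtype.ext
    push_cast
    rw [Finset.sum_attach d.support (fun ν => monomial ν (coeff ν d))]
    exact d.as_sum
  rw [hsum, ← Submodule.mkQ_apply, map_sum]
  refine Submodule.sum_mem _ fun ν _ => ?_
  have hgej : j ≤ Finsupp.degree ν.1 := by
    by_contra h
    exact (MvPolynomial.mem_support_iff.mp ν.2) (delta_pow_le_W j hd ν.1 (by omega))
  have hmem : monomial ν.1 (coeff ν.1 d) ∈ Δ A N ^ j := monomial_mem_delta_pow hgej _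
  by_cases hν : Finsupp.degree ν.1 = j
  · have : (Submodule.mkQ (QDmod A N j)) ⟨monomial ν.1 (coeff ν.1 d), hmem⟩ =
        coeff ν.1 d • xcl A N j ⟨ν.1, hν⟩ := by
      rw [xcl, ← Submodule.Quotient.mk_smul]
      show Submodule.Quotient.mk _ = _
      congr 1
      apply Subtype.ext
      show monomial ν.1 (coeff ν.1 d) = coeff ν.1 d • monomial ν.1 1
      rw [smul_monomial, smul_eq_mul, mul_one]
    rw [this]
    exact Submodule.smul_mem _ _ (Submodule.subset_span ⟨⟨ν.1, hν⟩, rfl⟩)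
  · have hgt : j + 1 ≤ Finsupp.degree ν.1 := by
      have : ¬ Finsupp.degree ν.1 < j := fun h =>
        (MvPolynomial.mem_support_iff.mp ν.2) (delta_pow_le_W j hd ν.1 h)
      omega
    have : (Submodule.mkQ (QDmod A N j)) ⟨monomial ν.1 (coeff ν.1 d), hmem⟩ = 0 := by
      rw [Submodule.mkQ_apply, Submodule.Quotient.mk_eq_zero]
      exact monomial_mem_delta_pow hgt _
    rw [this]
    exact Submodule.zero_mem _

/-- The assembling map `η : (S →₀ QJ) → QJ ⊗ QD`. -/
def eta : ({ν : Fin N →₀ ℕ // Finsupp.degree ν = j} →₀ QJ A J j m) →ₗ[A]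
    QJ A J j m ⊗[A] QD A N j :=
  Finsupp.lsum A fun ν => (TensorProduct.mk A (QJ A J j m) (QD A N j)).flip (xcl A N j ν)

lemma eta_single (ν : {ν : Fin N →₀ ℕ // Finsupp.degree ν = j}) (q : QJ A J j m) :
    eta A J N j m (Finsupp.single ν q) = q ⊗ₜ[A] xcl A N j ν := by
  simp [eta]

lemma eta_surjective : Function.Surjective (eta A J N j m) := by
  intro t
  induction t with
  | zero => exact ⟨0, map_zero _⟩
  | tmul q y =>
      have hy : y ∈ Submodule.span A (Set.range (xcl A N j)) := by
        rw [span_xcl]; trivial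
      refine Submodule.span_induction (p := fun y _ => ∃ c, eta A J N j m c = q ⊗ₜ[A] y)
        ?_ ?_ ?_ ?_ hy
      · rintro _ ⟨ν, rfl⟩
        exact ⟨Finsupp.single ν q, eta_single A J N j m ν q⟩
      · exact ⟨0, by rw [map_zero, TensorProduct.tmul_zero]⟩
      · rintro y1 y2 _ _ ⟨c1, hc1⟩ ⟨c2, hc2⟩
        exact ⟨c1 + c2, by rw [map_add, hc1, hc2, TensorProduct.tmul_add]⟩
      · rintro a y1 _ ⟨c, hc⟩
        exact ⟨a • c, by rw [map_smul, hc, TensorProduct.tmul_smul]⟩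
  | add t1 t2 h1 h2 =>
      obtain ⟨c1, hc1⟩ := h1
      obtain ⟨c2, hc2⟩ := h2
      exact ⟨c1 + c2, by rw [map_add, hc1, hc2]⟩

lemma theta_eta (ν : {ν : Fin N →₀ ℕ // Finsupp.degree ν = j})
    (c : {ν : Fin N →₀ ℕ // Finsupp.degree ν = j} →₀ QJ A J j m) :
    theta A J N j m ν.1 ν.2 (eta A J N j m c) = c ν := by
  classical
  induction c using Finsupp.induction_linear with
  | zero => simp
  | add f g hf hg => rw [map_add, map_add, hf, hg]; simp
  | single μ q =>
      rw [eta_single, xcl, theta_tmul]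
      show (coeff ν.1 (monomial μ.1 1)) • q = _
      rw [coeff_monomial, Finsupp.single_apply]
      by_cases h : μ = ν
      · subst h; simp
      · have : μ.1 ≠ ν.1 := fun hh => h (Subtype.ext hh)
        simp [this, h]


lemma filt_succ : filt A J N m (j + 1) = filt A J N m j + JR A J N ^ (m - j) * Δ A N ^ j := by
  rw [filt, filt, Finset.sum_range_succ, add_right_comm]

lemma iota_theta_phi (hjm : j ≤ m) (ν : Fin N →₀ ℕ) (hν : Finsupp.degree ν = j)
    (t : QJ A J j m ⊗[A] QD A N j) :
    ∃ p : MvPolynomial (Fin N) A, phi A J N j m hjm t = Submodule.Quotient.mk p ∧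
      iota A J j m (theta A J N j m ν hν t) = Submodule.Quotient.mk (coeff ν p) := by
  induction t with
  | zero =>
      refine ⟨0, by rw [map_zero]; exact (Submodule.Quotient.mk_eq_zero _).mpr (Submodule.zero_mem _) |>.symm, ?_⟩
      rw [map_zero, map_zero, coeff_zero]
      exact ((Submodule.Quotient.mk_eq_zero _).mpr (Submodule.zero_mem _)).symm
  | tmul q y =>
      obtain ⟨a, rfl⟩ := Submodule.Quotient.mk_surjective _ q
      obtain ⟨dd, rfl⟩ := Submodule.Quotient.mk_surjective _ y
      refine ⟨C a.1 * dd.1, phi_apply A J N j m hjm a.1 a.2 dd.1 dd.2, ?_⟩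
      rw [theta_tmul, map_smul, iota_mk, coeff_C_mul]
      rw [← Submodule.Quotient.mk_smul]
      congr 1
      rw [smul_eq_mul, mul_comm]
  | add t1 t2 h1 h2 =>
      obtain ⟨p1, hp1, hq1⟩ := h1
      obtain ⟨p2, hp2, hq2⟩ := h2
      refine ⟨p1 + p2, ?_, ?_⟩
      · rw [map_add, hp1, hp2, Submodule.Quotient.mk_add]
      · rw [map_add, map_add, hq1, hq2, coeff_add, Submodule.Quotient.mk_add]

lemma phi_injective (hjm : j ≤ m) : Function.Injective (phi A J N j m hjm) := by
  have hker : ∀ t, phi A J N j m hjm t = 0 → t = 0 := by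
    intro t ht
    obtain ⟨c, rfl⟩ := eta_surjective A J N j m t
    have hc : c = 0 := by
      ext ν
      rw [← theta_eta A J N j m ν c]
      obtain ⟨p, hp, hq⟩ := iota_theta_phi A J N j m hjm ν.1 ν.2 (eta A J N j m c)
      rw [ht] at hp
      have hpf : p ∈ filt A J N m j := (Submodule.Quotient.mk_eq_zero _).mp hp.symm
      have : iota A J j m (theta A J N j m ν.1 ν.2 (eta A J N j m c)) = 0 := by
        rw [hq, Submodule.Quotient.mk_eq_zero]
        exact coeff_filt hjm hpf ν.2
      have := iota_injective A J j m (by rw [this, map_zero] :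
        iota A J j m (theta A J N j m ν.1 ν.2 (eta A J N j m c)) = iota A J j m 0)
      simp [this]
    rw [hc, map_zero]
  intro x y hxy
  have : phi A J N j m hjm (x - y) = 0 := by rw [map_sub, hxy, sub_self]
  have := hker _ this
  exact sub_eq_zero.mp this

lemma phi_range (hjm : j ≤ m) :
    LinearMap.range (phi A J N j m hjm) =
      Submodule.map ((filt A J N m j).mkQ.restrictScalars A)
        ((filt A J N m (j + 1)).restrictScalars A) := by
  apply le_antisymm
  · rintro x ⟨t, rfl⟩
    induction t with
    | zero => rw [map_zero]; exact Submodule.zero_mem _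
    | tmul q y =>
        obtain ⟨a, rfl⟩ := Submodule.Quotient.mk_surjective _ q
        obtain ⟨dd, rfl⟩ := Submodule.Quotient.mk_surjective _ y
        have hmem : C a.1 * dd.1 ∈ (filt A J N m (j + 1)).restrictScalars A := by
          show C a.1 * dd.1 ∈ filt A J N m (j + 1)
          rw [filt_succ]
          refine Submodule.mem_sup_right (Ideal.mul_mem_mul ?_ dd.2)
          rw [JR_pow]
          exact Ideal.mem_map_of_mem _ a.2
        have := Submodule.mem_map_of_mem
          (f := (filt A J N m j).mkQ.restrictScalars A) hmem
        rw [show ((filt A J N m j).mkQ.restrictScalars A) (C a.1 * dd.1)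
            = Submodule.Quotient.mk (C a.1 * dd.1) from rfl] at this
        rw [phi_apply A J N j m hjm a.1 a.2 dd.1 dd.2]
        exact this
    | add t1 t2 h1 h2 => rw [map_add]; exact Submodule.add_mem _ h1 h2
  · rintro x ⟨p, hp, rfl⟩
    have hp' : p ∈ filt A J N m (j + 1) := hp
    rw [filt_succ] at hp'
    rcases Submodule.mem_sup.mp hp' with ⟨p1, hp1, p2, hp2, rfl⟩
    have hmk : ((filt A J N m j).mkQ.restrictScalars A) (p1 + p2) =
        Submodule.Quotient.mk p2 := by
      rw [map_add]
      have h0 : ((filt A J N m j).mkQ.restrictScalars A) p1 = 0 :=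
        (Submodule.Quotient.mk_eq_zero _).mpr hp1
      rw [h0, zero_add]
      rfl
    rw [hmk]
    clear hmk hp hp'
    refine Submodule.mul_induction_on hp2 ?_ ?_
    · intro x hx y hy
      rw [JR_pow] at hx
      refine Submodule.span_induction
        (p := fun x _ => ∀ y' ∈ Δ A N ^ j,
          Submodule.Quotient.mk (x * y') ∈ LinearMap.range (phi A J N j m hjm)) ?_ ?_ ?_ ?_ hx y hy
      · rintro _ ⟨a, ha, rfl⟩ y' hy'
        exact ⟨_, phi_apply A J N j m hjm a ha y' hy'⟩
      · intro y' hy'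
        rw [zero_mul, Submodule.Quotient.mk_zero]
        exact Submodule.zero_mem _
      · intro x1 x2 _ _ h1 h2 y' hy'
        rw [add_mul, Submodule.Quotient.mk_add]
        exact Submodule.add_mem _ (h1 y' hy') (h2 y' hy')
      · intro r x1 _ h1 y' hy'
        rw [smul_eq_mul, show r * x1 * y' = x1 * (y' * r) by ring]
        exact h1 (y' * r) (Ideal.mul_mem_right r _ hy')
    · intro z1 z2 h1 h2
      rw [Submodule.Quotient.mk_add]
      exact Submodule.add_mem _ h1 h2

end Maps

end EnvProof

open EnvelopeFiltration in
/-- Let `A` be a commutative ring, `J ⊆ A` an ideal, `N ∈ ℕ`,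
`R = A[X_1, …, X_N]`, `Δ = (X_1, …, X_N)` and `𝔍 = J·R + Δ`.  For `0 ≤ j ≤ m`,
multiplication in `R` induces a well-defined `A`-linear map
`(J^{m-j}/J^{m-j+1}) ⊗_A (Δ^j/Δ^{j+1}) →
  (J^m·R + ⋯ + J^{m-j}·Δ^j + 𝔍^{m+1}) / (J^m·R + ⋯ + J^{m-j+1}·Δ^{j-1} + 𝔍^{m+1})`,
and this map is an isomorphism of `A`-modules (formalized as: the induced `A`-linear map
to `R ⧸ (J^m·R + ⋯ + J^{m-j+1}·Δ^{j-1} + 𝔍^{m+1})` is injective with image exactly the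
image of `J^m·R + ⋯ + J^{m-j}·Δ^j + 𝔍^{m+1}`). -/
theorem envelope_filtration_graded_piece
    (A : Type u) [CommRing A] (J : Ideal A) (N : ℕ) (j m : ℕ) (hjm : j ≤ m) :
    ∃ φ : ((J ^ (m - j) : Ideal A) ⧸
            Submodule.comap (J ^ (m - j) : Ideal A).subtype (J ^ (m - j + 1) : Ideal A))
          ⊗[A]
          ((Δ A N ^ j : Ideal (MvPolynomial (Fin N) A)) ⧸
            Submodule.comap (Δ A N ^ j : Ideal (MvPolynomial (Fin N) A)).subtype
              (Δ A N ^ (j + 1) : Ideal (MvPolynomial (Fin N) A)))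
        →ₗ[A] (MvPolynomial (Fin N) A ⧸ filt A J N m j),
      (∀ (a : A) (ha : a ∈ J ^ (m - j))
          (d : MvPolynomial (Fin N) A) (hd : d ∈ Δ A N ^ j),
        φ ((Submodule.Quotient.mk
              (p := Submodule.comap (J ^ (m - j) : Ideal A).subtype (J ^ (m - j + 1) : Ideal A))
              ⟨a, ha⟩) ⊗ₜ[A]
            (Submodule.Quotient.mk
              (p := Submodule.comap (Δ A N ^ j : Ideal (MvPolynomial (Fin N) A)).subtype
                (Δ A N ^ (j + 1) : Ideal (MvPolynomial (Fin N) A)))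
              ⟨d, hd⟩)) =
          Submodule.Quotient.mk (MvPolynomial.C a * d)) ∧
      Function.Injective φ ∧
      LinearMap.range φ =
        Submodule.map ((filt A J N m j).mkQ.restrictScalars A)
          ((filt A J N m (j + 1)).restrictScalars A) := by
  exact ⟨EnvProof.phi A J N j m hjm,
    fun a ha d hd => EnvProof.phi_apply A J N j m hjm a ha d hd,
    EnvProof.phi_injective A J N j m hjm,
    EnvProof.phi_range A J N j m hjm⟩
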